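/- If a binary word w contains at least one 1 and is even, then w = 0^s 1 (0^{s+t} 1)^k 0^t for some natural numbers s, t, k ≥ 0. -/

import Mathlib

/-- k-fold concatenation of a word -/
def pw (u : List Bool) (k : ℕ) : List Bool := (List.replicate k u).flatten

/-- a block of `s` zeros -/
def zeros (s : ℕ) : List Bool := List.replicate s false

/-- `w` is an abelian square: `w = s ++ t` with `t` a permutation of `s`
(equivalently over a binary alphabet: equal length and equal number of 1's). -/
def IsAbelianSquare (w : List Bool) : Prop :=
  ∃ s t : List Bool, w = s ++ t ∧ s.length = t.length ∧ s.count true = t.count true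

def w4 : List Bool := [true, false, false, false]
def w3 : List Bool := [true, false, false]
def w2 : List Bool := [true, false]

/-- the word z = (1000)^n (100) (10)^(n!+n) (100) (100)^(2(n!+n)) -/
def Z (n : ℕ) : List Bool :=
  pw w4 n ++ w3 ++ pw w2 (n.factorial + n) ++ w3 ++ pw w3 (2 * (n.factorial + n))

/-- membership in the regular language R = (1000)^* (100) (10)^* (100) (100)^* -/
def InR (w : List Bool) : Prop :=
  ∃ a b c : ℕ, w = pw w4 a ++ w3 ++ pw w2 b ++ w3 ++ pw w3 c

/-- the gap sequence `[s_0, s_1, ..., s_k]` of `w = 0^{s_0} 1 0^{s_1} 1 ⋯ 1 0^{s_k}` -/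
def gaps (w : List Bool) : List ℕ := (w.splitOn true).map List.length

/-- `alt w` = number of indices `1 ≤ i < k` with `s_i ≠ s_{i+1}` -/
def alt (w : List Bool) : ℕ :=
  ((gaps w).tail.zip (gaps w).tail.tail).countP (fun p => decide (p.1 ≠ p.2))

/-- writing `w = 0^{s_1} 1 0^{s_2} 1 ⋯ 0^{s_k} 1 0^{s_{k+1}}` (with k ones),
the cyclic sequence `(s_1 + s_{k+1}, s_2, …, s_k)` -/
def cyclicGaps (w : List Bool) : List ℕ :=
  ((gaps w).headI + (gaps w).getLast!) :: (gaps w).tail.dropLast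

/-- `w` (containing a 1) is uneven: the cyclic gap sequence has length > 1 and
two cyclically adjacent unequal entries (equivalently it is not constant) -/
def Uneven (w : List Bool) : Prop :=
  2 ≤ w.count true ∧ ¬ (cyclicGaps w).Chain' (· = ·)

/-- `w` (containing a 1) is even if it is not uneven -/
def EvenWord (w : List Bool) : Prop := true ∈ w ∧ ¬ Uneven w

lemma splitOnP_forall {α : Type*} (p : α → Bool) (w : List α) :
    ∀ x ∈ w.splitOnP p, ∀ y ∈ x, ¬ p y := by
  induction w with
  | nil => simp
  | cons a l ih =>
    rw [List.splitOnP_cons]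
    split_ifs with h
    · simpa using ih
    · obtain ⟨c, L, hc⟩ : ∃ c L, l.splitOnP p = c :: L := by
        cases hs : l.splitOnP p with
        | nil => exact absurd hs (List.splitOnP_ne_nil p l)
        | cons c L => exact ⟨c, L, rfl⟩
      rw [hc]
      simp only [List.modifyHead_cons]
      intro x hx y hy
      rcases List.mem_cons.1 hx with rfl | hx
      · rcases List.mem_cons.1 hy with rfl | hy
        · simpa using h
        · exact ih c (hc ▸ List.mem_cons_self) y hy
      · exact ih x (hc ▸ List.mem_cons_of_mem _ hx) y hy

lemma splitOnP_length {α : Type*} (p : α → Bool) (w : List α) :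
    (w.splitOnP p).length = w.countP p + 1 := by
  induction w with
  | nil => simp
  | cons a l ih =>
    rw [List.splitOnP_cons, List.countP_cons]
    split_ifs with h
    · simp [ih, h]
    · simp [List.length_modifyHead, ih, h]

lemma intercalate_cons_cons {α : Type*} (sep a b : List α) (l : List (List α)) :
    List.intercalate sep (a :: b :: l) = a ++ sep ++ List.intercalate sep (b :: l) := by
  simp [List.intercalate, List.flatten]

lemma build (c d : List Bool) (k : ℕ) :
    [true].intercalate (List.replicate k c ++ [d]) = pw (c ++ [true]) k ++ d := by
  induction k with
  | zero => simp [pw, List.intercalate]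
  | succ k ih =>
    rw [List.replicate_succ, List.cons_append]
    have : ∃ e L, List.replicate k c ++ [d] = e :: L := by
      cases k <;> exact ⟨_, _, rfl⟩
    obtain ⟨e, L, hE⟩ := this
    rw [hE, intercalate_cons_cons, ← hE, ih]
    simp [pw, List.replicate_succ, List.append_assoc]

lemma chain_const (l : List ℕ) (x : ℕ) (h : List.Chain' (· = ·) (x :: l)) :
    l = List.replicate l.length x := by
  induction l generalizing x with
  | nil => rfl
  | cons y l ih =>
    simp only [List.Chain', List.isChain_cons_cons] at h
    obtain ⟨rfl, h2⟩ := h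
    rw [List.length_cons, List.replicate_succ, ← ih _ h2]

lemma getLast!_concat' (a : ℕ) (l : List ℕ) : (l ++ [a]).getLast! = a :=
  List.getLast!_of_getLast? (List.getLast?_concat)

lemma reconstruct (w : List Bool) : w = [true].intercalate ((gaps w).map zeros) := by
  conv_lhs => rw [← List.intercalate_splitOn true (xs := w)]
  congr 1
  rw [gaps, List.map_map]
  symm
  have key : ∀ c ∈ w.splitOn true, (zeros ∘ List.length) c = c := by
    intro c hc
    have h := splitOnP_forall (· == true) w c hc
    symm
    rw [Function.comp_apply, zeros, List.eq_replicate_iff]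
    refine ⟨rfl, fun b hb => ?_⟩
    have := h b hb
    cases b
    · rfl
    · simp at this
  calc (w.splitOn true).map (zeros ∘ List.length)
      = (w.splitOn true).map id := List.map_congr_left (by simpa using key)
    _ = w.splitOn true := List.map_id _

lemma gaps_length (w : List Bool) : (gaps w).length = w.count true + 1 := by
  rw [gaps, List.length_map, List.count_eq_countP]
  exact splitOnP_length _ w

theorem stmt5 (w : List Bool) (h1 : true ∈ w) (he : EvenWord w) :
    ∃ s t k : ℕ, w = zeros s ++ [true] ++ pw (zeros (s + t) ++ [true]) k ++ zeros t := by
  have hrec := reconstruct w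
  have hcount : 1 ≤ w.count true := List.count_pos_iff.2 h1
  obtain ⟨-, hne⟩ := he
  rw [Uneven, not_and_or, not_not] at hne
  rcases hne with hlt | hch
  · -- exactly one 1
    have hc1 : w.count true = 1 := by omega
    have hlen : (gaps w).length = 2 := by rw [gaps_length, hc1]
    obtain ⟨s, t, hG⟩ := List.length_eq_two.1 hlen
    refine ⟨s, t, 0, ?_⟩
    rw [hrec, hG]
    simp [pw, List.intercalate, List.append_assoc]
  · -- cyclic gaps constant
    have hlen : 2 ≤ (gaps w).length := by rw [gaps_length]; omega
    obtain ⟨a, R, hG0⟩ : ∃ a R, gaps w = a :: R := by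
      cases hg : gaps w with
      | nil => rw [hg] at hlen; simp at hlen
      | cons a R => exact ⟨a, R, rfl⟩
    obtain ⟨M, b, hR⟩ : ∃ M b, R = M ++ [b] := by
      rcases R.eq_nil_or_concat with rfl | ⟨M, b, h⟩
      · rw [hG0] at hlen; simp at hlen
      · exact ⟨M, b, by simpa using h⟩
    have hG : gaps w = a :: M ++ [b] := by rw [hG0, hR]; rfl
    have hcg : cyclicGaps w = (a + b) :: M := by
      rw [cyclicGaps, hG]
      congr 1
      · congr 1
        exact getLast!_concat' _ _
      · simp [List.dropLast_concat]
    rw [hcg] at hch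
    have hM : M = List.replicate M.length (a + b) := chain_const _ _ hch
    refine ⟨a, b, M.length, ?_⟩
    rw [hrec, hG, List.cons_append, List.map_cons]
    have hmap : (M ++ [b]).map zeros =
        List.replicate M.length (zeros (a + b)) ++ [zeros b] := by
      conv_lhs => rw [hM]
      simp
    rw [hmap]
    have : ∃ e L, List.replicate M.length (zeros (a + b)) ++ [zeros b] = e :: L := by
      cases M.length <;> exact ⟨_, _, rfl⟩
    obtain ⟨e, L, hE⟩ := this
    rw [hE, intercalate_cons_cons, ← hE, build]
    simp [zeros, List.append_assoc]
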